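/- Let T be a sequential topological space, X a metric space, H the space of nonempty compact subsets of X with the Hausdorff metric. If Z ⊆ T × X is closed, the projection π₁ : Z → T is open and proper, and every fiber Z_t = {x : (t,x) ∈ Z} is nonempty, then the map f : T → H, f(t) = Z_t, is continuous. -/
import Mathlib


open TopologicalSpace

theorem stmt11 (T : Type*) [TopologicalSpace T] [SequentialSpace T]
    (X : Type*) [MetricSpace X] (Z : Set (T × X)) (hZ : IsClosed Z)
    (hopen : IsOpenMap (fun z : Z => z.1.1))
    (hproper : IsProperMap (fun z : Z => z.1.1))
    (hne : ∀ t : T, {x : X | (t, x) ∈ Z}.Nonempty) :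
    ∃ f : T → NonemptyCompacts X,
      (∀ t : T, (f t : Set X) = {x : X | (t, x) ∈ Z}) ∧ Continuous f := by
  set g : Z → T := fun z => z.1.1 with hg
  set K : T → Set X := fun t => {x : X | (t, x) ∈ Z} with hK
  have hsnd : Continuous (fun z : Z => z.1.2) :=
    continuous_snd.comp (continuous_subtype_val)
  have hKeq : ∀ t, K t = (fun z : Z => z.1.2) '' (g ⁻¹' {t}) := by
    intro t
    ext x
    constructor
    · intro hx
      exact ⟨⟨(t, x), hx⟩, rfl, rfl⟩
    · rintro ⟨⟨⟨t', x'⟩, hz⟩, ht', hx'⟩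
      simp only [g, Set.mem_preimage, Set.mem_singleton_iff] at ht'
      simp only at hx'
      subst ht'; subst hx'
      exact hz
  have hcomp : ∀ t, IsCompact (K t) := by
    intro t
    rw [hKeq t]
    exact ((hproper.isCompact_preimage isCompact_singleton).image hsnd)
  refine ⟨fun t => ⟨⟨K t, hcomp t⟩, hne t⟩, fun t => rfl, ?_⟩
  rw [continuous_iff_continuousAt]
  intro t
  rw [ContinuousAt, Metric.tendsto_nhds]
  intro ε hε
  have hε2 : (0:ℝ) < ε / 2 := by linarith
  have hε4 : (0:ℝ) < ε / 4 := by linarith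
  -- Step A: upper semicontinuity via properness
  have hCclosed : IsClosed {z : Z | z.1.2 ∉ Metric.thickening (ε/2) (K t)} := by
    have : IsClosed ((fun z : Z => z.1.2) ⁻¹' (Metric.thickening (ε/2) (K t))ᶜ) :=
      (Metric.isOpen_thickening.isClosed_compl).preimage hsnd
    exact this
  have himcl : IsClosed (g '' {z : Z | z.1.2 ∉ Metric.thickening (ε/2) (K t)}) :=
    hproper.isClosedMap _ hCclosed
  have htnot : t ∉ g '' {z : Z | z.1.2 ∉ Metric.thickening (ε/2) (K t)} := by
    rintro ⟨⟨⟨t', x'⟩, hz⟩, hmem, ht'⟩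
    simp only [g] at ht'
    subst ht'
    exact hmem (Metric.self_subset_thickening hε2 (K t') hz)
  have hU1 : (g '' {z : Z | z.1.2 ∉ Metric.thickening (ε/2) (K t)})ᶜ ∈ nhds t :=
    himcl.isOpen_compl.mem_nhds htnot
  -- Step B: lower semicontinuity via openness
  obtain ⟨s, hsK, hcover⟩ := (hcomp t).elim_nhds_subcover
    (fun x => Metric.ball x (ε/4)) (fun x _ => Metric.ball_mem_nhds x hε4)
  have hU2 : (⋂ x ∈ s, g '' {z : Z | z.1.2 ∈ Metric.ball x (ε/4)}) ∈ nhds t := by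
    refine (Filter.biInter_finset_mem s).mpr ?_
    intro x hx
    have hop : IsOpen (g '' {z : Z | z.1.2 ∈ Metric.ball x (ε/4)}) :=
      hopen _ (Metric.isOpen_ball.preimage hsnd)
    refine hop.mem_nhds ?_
    exact ⟨⟨(t, x), hsK x hx⟩, Metric.mem_ball_self hε4, rfl⟩
  filter_upwards [hU1, hU2] with t' h1 h2
  rw [Metric.NonemptyCompacts.dist_eq]
  have hle : Metric.hausdorffDist (K t') (K t) ≤ ε / 2 := by
    apply Metric.hausdorffDist_le_of_mem_dist hε2.le
    · -- every point of K t' is close to K t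
      intro x hx
      have hmem : x ∈ Metric.thickening (ε/2) (K t) := by
        by_contra hxn
        exact h1 ⟨⟨(t', x), hx⟩, hxn, rfl⟩
      obtain ⟨y, hy, hd⟩ := Metric.mem_thickening_iff.mp hmem
      exact ⟨y, hy, hd.le⟩
    · -- every point of K t is close to K t'
      intro y hy
      obtain ⟨x, hxs, hyx⟩ := Set.mem_iUnion₂.mp (hcover hy)
      have hx2 := Set.mem_iInter₂.mp h2 x hxs
      obtain ⟨⟨⟨t'', x'⟩, hz⟩, hball, ht''⟩ := hx2
      simp only [g] at ht''
      subst ht''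
      refine ⟨x', hz, ?_⟩
      simp only [Set.mem_setOf_eq, Metric.mem_ball] at hball hyx
      calc dist y x' ≤ dist y x + dist x x' := dist_triangle _ _ _
        _ ≤ ε/4 + ε/4 := by rw [dist_comm x x']; exact add_le_add hyx.le hball.le
        _ = ε/2 := by ring
  show Metric.hausdorffDist (K t') (K t) < ε
  linarith
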